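/- Let G be a minimal counterexample to the statement that planar graphs with girth ≥ 6 and maximum degree Δ ≥ 4 have strong chromatic index at most 3Δ+6 (minimal with respect to number of edges). Then every vertex of degree 1 in G is adjacent to a vertex of degree at least 5. -/

import Mathlib

open SimpleGraph Finset

universe u

variable {V : Type u}

/-- Two edges are at distance at most 2 (in the line graph sense): they share an
endpoint or some endpoint of one is adjacent to an endpoint of the other. -/
def edgesConflict (G : SimpleGraph V) (e f : Sym2 V) : Prop :=
  ∃ a b, a ∈ e ∧ b ∈ f ∧ (a = b ∨ G.Adj a b)

/-- A strong edge coloring: distinct edges at distance at most 2 get distinct colors. -/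
def IsStrongEdgeColoring (G : SimpleGraph V) {n : ℕ} (c : G.edgeSet → Fin n) : Prop :=
  ∀ e f : G.edgeSet, e ≠ f → edgesConflict G e.1 f.1 → c e ≠ c f

def HasStrongEdgeColoring (G : SimpleGraph V) (n : ℕ) : Prop :=
  ∃ c : G.edgeSet → Fin n, IsStrongEdgeColoring G c

/-- The strong chromatic index. -/
noncomputable def strongChromaticIndex (G : SimpleGraph V) : ℕ :=
  sInf { n | HasStrongEdgeColoring G n }

/-- A proper edge coloring: distinct edges sharing an endpoint get distinct colors. -/
def IsProperEdgeColoring (G : SimpleGraph V) {n : ℕ} (c : G.edgeSet → Fin n) : Prop :=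
  ∀ e f : G.edgeSet, e ≠ f → (∃ a, a ∈ e.1 ∧ a ∈ f.1) → c e ≠ c f

/-- The edge chromatic number (chromatic index). -/
noncomputable def edgeChromaticNumber (G : SimpleGraph V) : ℕ :=
  sInf { n | ∃ c : G.edgeSet → Fin n, IsProperEdgeColoring G c }

/-- `G` has `H` as a minor: disjoint nonempty connected branch sets, one per vertex of `H`,
with edges of `G` between branch sets corresponding to edges of `H`. -/
def HasMinor {W : Type} (G : SimpleGraph V) (H : SimpleGraph W) : Prop :=
  ∃ b : W → Set V, (∀ w, (b w).Nonempty) ∧ (∀ w, (G.induce (b w)).Connected) ∧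
    (Pairwise fun w₁ w₂ => Disjoint (b w₁) (b w₂)) ∧
    ∀ ⦃w₁ w₂⦄, H.Adj w₁ w₂ → ∃ a ∈ b w₁, ∃ a' ∈ b w₂, G.Adj a a'

/-- Planarity, via Wagner's theorem: no `K₅` minor and no `K₃,₃` minor. -/
def IsPlanar (G : SimpleGraph V) : Prop :=
  ¬ HasMinor G (⊤ : SimpleGraph (Fin 5)) ∧ ¬ HasMinor G (completeBipartiteGraph (Fin 3) (Fin 3))

lemma hasMinor_mono {W : Type} {G G' : SimpleGraph V} (h : G ≤ G') {H : SimpleGraph W}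
    (hm : HasMinor G H) : HasMinor G' H := by
  obtain ⟨b, h1, h2, h3, h4⟩ := hm
  refine ⟨b, h1, fun w => (h2 w).mono (fun a b' hab => h hab), h3, fun w1 w2 hadj => ?_⟩
  obtain ⟨a, ha, a', ha', haa⟩ := h4 hadj
  exact ⟨a, ha, a', ha', h haa⟩

lemma isPlanar_mono {G G' : SimpleGraph V} (h : G ≤ G') (hp : IsPlanar G') : IsPlanar G :=
  ⟨fun hm => hp.1 (hasMinor_mono h hm), fun hm => hp.2 (hasMinor_mono h hm)⟩

lemma edgesConflict_symm {G : SimpleGraph V} {e f : Sym2 V} (h : edgesConflict G e f) :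
    edgesConflict G f e := by
  obtain ⟨a, b, ha, hb, hab⟩ := h
  exact ⟨b, a, hb, ha, by rcases hab with h | h; exact Or.inl h.symm; exact Or.inr h.symm⟩

lemma walk_first_edge {G : SimpleGraph V} {a b : V} (q : G.Walk a b) (h : a ≠ b) :
    ∃ x, s(a, x) ∈ q.edges ∧ G.Adj a x := by
  cases q with
  | nil => exact absurd rfl h
  | cons h' p => exact ⟨_, by simp, h'⟩

lemma no_cycle_at_deg_one {G : SimpleGraph V} {v u : V}
    (huniq : ∀ x, G.Adj v x → x = u) (c : G.Walk v v) (hc : c.IsCycle) : False := by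
  cases c with
  | nil => exact hc.ne_nil rfl
  | cons hadj p =>
    rename_i x
    have hx : u = x := (huniq _ hadj).symm
    subst hx
    have hvu : v ≠ u := hadj.ne
    obtain ⟨y, hy, hadj'⟩ := walk_first_edge p.reverse hvu
    have hyu : y = u := huniq _ hadj'
    subst hyu
    rw [Walk.edges_reverse, List.mem_reverse] at hy
    exact ((Walk.cons_isCycle_iff p hadj).mp hc).2 hy

lemma cycle_avoids [DecidableEq V] {G : SimpleGraph V} {v u : V}
    (huniq : ∀ x, G.Adj v x → x = u) {a : V} (w : G.Walk a a) (hw : w.IsCycle) :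
    ∀ e ∈ w.edges, e ∉ ({s(v,u)} : Set (Sym2 V)) := by
  intro e he hmem
  rw [Set.mem_singleton_iff] at hmem
  subst hmem
  have hv : v ∈ w.support := w.fst_mem_support_of_mem_edges he
  exact no_cycle_at_deg_one huniq (w.rotate v hv) (hw.rotate hv)

lemma girth_deleteEdge [DecidableEq V] {G : SimpleGraph V} {v u : V}
    (huniq : ∀ x, G.Adj v x → x = u) (hg : 6 ≤ G.girth) :
    6 ≤ (G.deleteEdges {s(v,u)}).girth := by
  classical
  set H := G.deleteEdges ({s(v,u)} : Set (Sym2 V)) with hH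
  have hGcyc : ¬ G.IsAcyclic := by
    intro h
    rw [h.girth_eq_zero] at hg
    omega
  obtain ⟨a, w, hw, hlen⟩ := (exists_girth_eq_length (G := G)).mpr hGcyc
  have hHcyc : ¬ H.IsAcyclic := by
    intro h
    have hw' : (w.toDeleteEdges ({s(v,u)} : Set (Sym2 V)) (cycle_avoids huniq w hw)).IsCycle :=
      hw.transfer _
    exact h _ hw'
  have h1 : G.egirth ≤ H.egirth := egirth_anti (deleteEdges_le _)
  obtain ⟨m, hm⟩ : ∃ m : ℕ, (m : ℕ∞) = G.egirth :=
    (WithTop.ne_top_iff_exists).mp (egirth_eq_top.not.mpr hGcyc)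
  obtain ⟨n, hn⟩ : ∃ n : ℕ, (n : ℕ∞) = H.egirth :=
    (WithTop.ne_top_iff_exists).mp (egirth_eq_top.not.mpr hHcyc)
  have hg' : 6 ≤ m := by
    have : G.girth = m := by rw [girth, ← hm, ENat.toNat_coe]
    omega
  have hmn : m ≤ n := by
    rw [← hm, ← hn] at h1
    exact_mod_cast h1
  have : H.girth = n := by rw [girth, ← hn, ENat.toNat_coe]
  omega


/-- In a minimal counterexample to "planar, girth ≥ 6, max degree Δ ≥ 4 ⟹ χ'ₛ ≤ 3Δ+6",
every vertex of degree 1 is adjacent to a vertex of degree at least 5. -/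
theorem min_cex_one_vertex (V : Type) [Fintype V] [DecidableEq V] (G : SimpleGraph V)
    [DecidableRel G.Adj] (Δ : ℕ)
    (hplanar : IsPlanar G) (hgirth : 6 ≤ G.girth) (hmax : G.maxDegree = Δ) (hΔ : 4 ≤ Δ)
    (hcex : ¬ HasStrongEdgeColoring G (3 * Δ + 6))
    (hmin : ∀ (W : Type) [Fintype W] [DecidableEq W] (H : SimpleGraph W)
      [DecidableRel H.Adj], IsPlanar H → 6 ≤ H.girth → H.maxDegree ≤ Δ →
      H.edgeFinset.card < G.edgeFinset.card → HasStrongEdgeColoring H (3 * Δ + 6)) :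
    ∀ v, G.degree v = 1 → ∀ u, G.Adj v u → 5 ≤ G.degree u := by
  classical
  intro v hdegv u hvu
  by_contra hlt
  push_neg at hlt
  have hdegu : G.degree u ≤ 4 := by omega
  have huniq : ∀ x, G.Adj v x → x = u := by
    intro x hx
    have h1 : (G.neighborFinset v).card ≤ 1 := by
      have : (G.neighborFinset v).card = G.degree v := rfl
      omega
    exact Finset.card_le_one.mp h1 x (by rwa [mem_neighborFinset]) u (by rwa [mem_neighborFinset])
  set e₀ : Sym2 V := s(v, u) with he₀def
  set H : SimpleGraph V := G.deleteEdges ({e₀} : Set (Sym2 V)) with hHdef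
  haveI : DecidableRel H.Adj := fun a b =>
    decidable_of_iff (G.Adj a b ∧ ¬ s(a, b) = e₀)
      (by rw [hHdef, deleteEdges_adj, Set.mem_singleton_iff])
  have hHedgeSet : H.edgeSet = G.edgeSet \ {e₀} := edgeSet_deleteEdges _
  have he₀G : e₀ ∈ G.edgeSet := hvu
  have hmemH : ∀ {f : Sym2 V}, f ∈ G.edgeSet → f ≠ e₀ → f ∈ H.edgeSet := by
    intro f hf hne
    rw [hHedgeSet]
    exact ⟨hf, hne⟩
  have hmemG : ∀ {f : Sym2 V}, f ∈ H.edgeSet → f ∈ G.edgeSet ∧ f ≠ e₀ := by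
    intro f hf
    rw [hHedgeSet] at hf
    exact ⟨hf.1, hf.2⟩
  -- every edge containing v equals e₀
  have hEv : ∀ f ∈ G.edgeSet, v ∈ f → f = e₀ := by
    intro f hf hvf
    induction f with
    | _ a b =>
      rw [mem_edgeSet] at hf
      rw [he₀def]
      rcases Sym2.mem_iff.mp hvf with rfl | rfl
      · rw [huniq b hf]
      · rw [huniq a hf.symm]
        exact Sym2.eq_swap
  have hOther : ∀ f ∈ G.edgeSet, ∀ a ∈ f, ∃ x, f = s(a, x) ∧ G.Adj a x := by
    intro f hf a haf
    induction f with
    | _ p q =>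
      rw [mem_edgeSet] at hf
      rcases Sym2.mem_iff.mp haf with rfl | rfl
      · exact ⟨q, rfl, hf⟩
      · exact ⟨p, Sym2.eq_swap, hf.symm⟩
  -- fewer edges
  have hltE : H.edgeFinset.card < G.edgeFinset.card := by
    apply Finset.card_lt_card
    rw [Finset.ssubset_iff_of_subset (edgeFinset_mono (deleteEdges_le _))]
    refine ⟨e₀, mem_edgeFinset.mpr he₀G, ?_⟩
    rw [mem_edgeFinset, hHedgeSet]
    simp
  -- max degree
  have hmaxH : H.maxDegree ≤ Δ := by
    apply maxDegree_le_of_forall_degree_le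
    intro w
    have hsub : H.neighborFinset w ⊆ G.neighborFinset w := by
      intro x hx
      rw [mem_neighborFinset] at hx ⊢
      exact (deleteEdges_le _) hx
    calc H.degree w ≤ G.degree w := Finset.card_le_card hsub
      _ ≤ Δ := hmax ▸ G.degree_le_maxDegree w
  obtain ⟨c, hc⟩ := hmin V H (isPlanar_mono (deleteEdges_le _) hplanar)
    (girth_deleteEdge huniq hgirth) hmaxH hltE
  -- the set of conflicting edges
  set S : Finset (Sym2 V) := H.edgeFinset.filter (fun f => edgesConflict G e₀ f) with hSdef
  have hSmem : ∀ {f : Sym2 V}, f ∈ S → f ∈ H.edgeSet ∧ edgesConflict G e₀ f := by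
    intro f hf
    rw [hSdef, Finset.mem_filter] at hf
    exact ⟨mem_edgeFinset.mp hf.1, hf.2⟩
  have hScard : S.card ≤ 3 * Δ := by
    have hsub : S ⊆ ((G.neighborFinset u).erase v).biUnion (fun w => G.incidenceFinset w) := by
      intro f hf
      obtain ⟨hfH, a, b, ha, hb, hab⟩ := hSmem hf
      obtain ⟨hfG, hfne⟩ := hmemG hfH
      have hnv : ∀ x ∈ f, x ≠ v := by
        intro x hx hxv
        subst hxv
        exact hfne (hEv f hfG hx)
      rw [he₀def] at ha
      have hbf : u ∈ f ∨ (G.Adj u b ∧ b ∈ f) := by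
        rcases Sym2.mem_iff.mp ha with rfl | rfl
        · rcases hab with rfl | hab
          · exact absurd rfl (hnv _ hb)
          · rw [huniq b hab] at hb
            exact Or.inl hb
        · rcases hab with rfl | hab
          · exact Or.inl hb
          · exact Or.inr ⟨hab, hb⟩
      rw [Finset.mem_biUnion]
      rcases hbf with huf | ⟨hub, hbfm⟩
      · obtain ⟨x, hfx, hux⟩ := hOther f hfG u huf
        have hxv : x ≠ v := by
          intro hxv
          subst hxv
          exact hfne (by rw [hfx, he₀def]; exact Sym2.eq_swap)
        refine ⟨x, Finset.mem_erase.mpr ⟨hxv, (G.mem_neighborFinset _ _).mpr hux⟩, ?_⟩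
        rw [mem_incidenceFinset]
        exact ⟨hfG, by rw [hfx]; simp⟩
      · refine ⟨b, Finset.mem_erase.mpr ⟨hnv b hbfm, (G.mem_neighborFinset _ _).mpr hub⟩, ?_⟩
        rw [mem_incidenceFinset]
        exact ⟨hfG, hbfm⟩
    have hU : (((G.neighborFinset u).erase v).biUnion (fun w => G.incidenceFinset w)).card
        ≤ ((G.neighborFinset u).erase v).card * Δ := by
      refine le_trans (Finset.card_biUnion_le) ?_
      have := Finset.sum_le_card_nsmul ((G.neighborFinset u).erase v)
        (fun w => (G.incidenceFinset w).card) Δ ?_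
      · simpa using this
      · intro w _
        show (G.incidenceFinset w).card ≤ Δ
        rw [card_incidenceFinset_eq_degree]
        exact hmax ▸ G.degree_le_maxDegree w
    have hce : ((G.neighborFinset u).erase v).card = G.degree u - 1 := by
      rw [Finset.card_erase_of_mem ((G.mem_neighborFinset _ _).mpr hvu.symm)]
      rfl
    have : ((G.neighborFinset u).erase v).card ≤ 3 := by omega
    calc S.card ≤ _ := Finset.card_le_card hsub
      _ ≤ _ := hU
      _ ≤ 3 * Δ := Nat.mul_le_mul_right Δ this
  -- free color
  set used : Finset (Fin (3 * Δ + 6)) :=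
    S.attach.image (fun f => c ⟨f.1, (hSmem f.2).1⟩) with husedDef
  have husedcard : used.card ≤ 3 * Δ := by
    refine le_trans Finset.card_image_le ?_
    rw [Finset.card_attach]
    exact hScard
  obtain ⟨k, hk⟩ : ∃ k : Fin (3 * Δ + 6), k ∉ used := by
    by_contra h
    push_neg at h
    have heq : used = Finset.univ := Finset.eq_univ_iff_forall.mpr h
    have : (Finset.univ : Finset (Fin (3 * Δ + 6))).card = 3 * Δ + 6 := by simp
    rw [heq, this] at husedcard
    omega
  -- conflicts in G between H-edges are conflicts in H
  have conflictH : ∀ {p q : Sym2 V}, p ∈ H.edgeSet → q ∈ H.edgeSet →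
      edgesConflict G p q → edgesConflict H p q := by
    intro p q hp hq hconf
    obtain ⟨a, b, ha, hb, hab⟩ := hconf
    rcases hab with rfl | hab
    · exact ⟨a, a, ha, hb, Or.inl rfl⟩
    · by_cases hE : s(a, b) = e₀
      · exfalso
        rw [he₀def, Sym2.eq_iff] at hE
        rcases hE with ⟨rfl, rfl⟩ | ⟨rfl, rfl⟩
        · exact (hmemG hp).2 (hEv p (hmemG hp).1 ha)
        · exact (hmemG hq).2 (hEv q (hmemG hq).1 hb)
      · refine ⟨a, b, ha, hb, Or.inr ?_⟩
        rw [hHdef, deleteEdges_adj]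
        exact ⟨hab, by simpa using hE⟩
  -- build the coloring of G
  apply hcex
  refine ⟨fun f => if h : f.1 = e₀ then k else c ⟨f.1, hmemH f.2 h⟩, ?_⟩
  intro e f hne hconf
  by_cases he : e.1 = e₀ <;> by_cases hf : f.1 = e₀
  · exact absurd (Subtype.ext (he.trans hf.symm)) hne
  · have hfS : f.1 ∈ S := by
      rw [hSdef, Finset.mem_filter]
      refine ⟨mem_edgeFinset.mpr (hmemH f.2 hf), ?_⟩
      rw [← he]
      exact hconf
    have hcf : c ⟨f.1, hmemH f.2 hf⟩ ∈ used := by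
      rw [husedDef]
      exact Finset.mem_image.mpr ⟨⟨f.1, hfS⟩, Finset.mem_attach _ _, rfl⟩
    simp only [dif_pos he, dif_neg hf]
    intro hEq
    exact hk (hEq ▸ hcf)
  · have heS : e.1 ∈ S := by
      rw [hSdef, Finset.mem_filter]
      refine ⟨mem_edgeFinset.mpr (hmemH e.2 he), ?_⟩
      rw [← hf]
      exact edgesConflict_symm hconf
    have hce' : c ⟨e.1, hmemH e.2 he⟩ ∈ used := by
      rw [husedDef]
      exact Finset.mem_image.mpr ⟨⟨e.1, heS⟩, Finset.mem_attach _ _, rfl⟩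
    simp only [dif_neg he, dif_pos hf]
    intro hEq
    exact hk (hEq ▸ hce')
  · simp only [dif_neg he, dif_neg hf]
    apply hc ⟨e.1, hmemH e.2 he⟩ ⟨f.1, hmemH f.2 hf⟩
    · intro hEq
      have hv1 := congrArg Subtype.val hEq
      exact hne (Subtype.ext hv1)
    · exact conflictH (hmemH e.2 he) (hmemH f.2 hf) hconf
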